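/- Let (D1, M) be a periodic first-derivative SBP operator with diagonal mass matrix (M symmetric positive definite and diagonal, M·D1 + D1ᵀ·M = 0) and D2 a periodic second-derivative SBP operator with the same mass matrix M (M·D2 = −A2, A2 symmetric positive semidefinite). Then both I − D2 and 4I − D2 are invertible, and for every differentiable u : ℝ → ℝ^m satisfying the split-form Degasperis-Procesi semidiscretization ∂ₜu = −(1/3)·(I − D2)⁻¹·(4I − D2)·(D1·(u∘u) + u∘(D1·u)) for all t, the discrete invariant (1/2)·u(t)ᵀ·(I − D2)ᵀ·M·(4I − D2)⁻¹·u(t) is constant in t. -/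

import Mathlib

open Matrix

/-- Derivative of a quadratic form along a differentiable curve. -/
theorem hasDerivAt_quadform {m : ℕ} (B : Matrix (Fin m) (Fin m) ℝ)
    (u : ℝ → Fin m → ℝ) (u' : Fin m → ℝ) (t : ℝ) (hu : HasDerivAt u u' t) :
    HasDerivAt (fun s => u s ⬝ᵥ (B *ᵥ u s))
      (u' ⬝ᵥ (B *ᵥ u t) + u t ⬝ᵥ (B *ᵥ u')) t := by
  have hcomp : ∀ i, HasDerivAt (fun s => u s i) (u' i) t := hasDerivAt_pi.mp hu
  have hinner : ∀ i, HasDerivAt (fun s => ∑ j, B i j * u s j) (∑ j, B i j * u' j) t := by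
    intro i
    exact HasDerivAt.fun_sum fun j _ => (hcomp j).const_mul (B i j)
  have h : HasDerivAt (fun s => ∑ i, u s i * ∑ j, B i j * u s j)
      (∑ i, (u' i * ∑ j, B i j * u t j + u t i * ∑ j, B i j * u' j)) t :=
    HasDerivAt.fun_sum fun i _ => (hcomp i).mul (hinner i)
  have heqf : (fun s => u s ⬝ᵥ (B *ᵥ u s))
      = fun s => ∑ i, u s i * ∑ j, B i j * u s j := by
    funext s; simp [dotProduct, mulVec]
  have heq : u' ⬝ᵥ (B *ᵥ u t) + u t ⬝ᵥ (B *ᵥ u')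
      = ∑ i, (u' i * ∑ j, B i j * u t j + u t i * ∑ j, B i j * u' j) := by
    simp [dotProduct, mulVec, Finset.sum_add_distrib]
  rw [heqf, heq]
  exact h

/-- Moving a matrix across a dot product. -/
theorem dot_transfer {m : ℕ} (A : Matrix (Fin m) (Fin m) ℝ) (x y : Fin m → ℝ) :
    (A *ᵥ x) ⬝ᵥ y = x ⬝ᵥ (Aᵀ *ᵥ y) := by
  rw [dotProduct_comm, dotProduct_mulVec, mulVec_transpose, dotProduct_comm]

/-- If `A` and `B` commute and `B` is invertible, `A` commutes with `B⁻¹`. -/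
theorem commute_inv_right {m : ℕ} (A B : Matrix (Fin m) (Fin m) ℝ)
    (hB : IsUnit B.det) (h : A * B = B * A) : A * B⁻¹ = B⁻¹ * A := by
  have h2 : B * (A * B⁻¹) = B * (B⁻¹ * A) := by
    rw [← Matrix.mul_assoc, ← h, Matrix.mul_assoc, Matrix.mul_nonsing_inv _ hB,
      Matrix.mul_one, ← Matrix.mul_assoc, Matrix.mul_nonsing_inv _ hB, Matrix.one_mul]
  calc A * B⁻¹ = B⁻¹ * B * (A * B⁻¹) := by
        rw [Matrix.nonsing_inv_mul _ hB, Matrix.one_mul]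
    _ = B⁻¹ * (B * (A * B⁻¹)) := by rw [Matrix.mul_assoc]
    _ = B⁻¹ * (B * (B⁻¹ * A)) := by rw [h2]
    _ = B⁻¹ * A := by
        rw [← Matrix.mul_assoc B B⁻¹ A, Matrix.mul_nonsing_inv _ hB, Matrix.one_mul]

/-- For periodic SBP operators `D1`, `D2` with a common diagonal symmetric
positive definite mass matrix `M`, both `I − D2` and `4I − D2` are invertible,
and the split-form Degasperis-Procesi semidiscretization
`∂ₜu = −(1/3)(I − D2)⁻¹ (4I − D2) (D1 (u∘u) + u∘(D1 u))`
conserves the discrete invariant `(1/2) uᵀ (I − D2)ᵀ M (4I − D2)⁻¹ u`. -/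
theorem degasperis_procesi_conserves_invariant
    (m : ℕ) (D1 D2 M A2 : Matrix (Fin m) (Fin m) ℝ)
    (hM : M.PosDef) (hMdiag : M.IsDiag)
    (hD1 : M * D1 + D1ᵀ * M = 0)
    (hA2 : A2.PosSemidef)
    (hD2 : M * D2 = -A2) :
    IsUnit (1 - D2) ∧ IsUnit (4 - D2) ∧
      ∀ u : ℝ → Fin m → ℝ,
        (∀ t, HasDerivAt u
          (-((1 / 3 : ℝ) • ((1 - D2)⁻¹ *ᵥ ((4 - D2) *ᵥ
            (D1 *ᵥ (u t * u t) + u t * (D1 *ᵥ u t)))))) t) →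
        ∀ t₁ t₂ : ℝ,
          (1 / 2 : ℝ) * (((1 - D2) *ᵥ u t₁) ⬝ᵥ (M *ᵥ ((4 - D2)⁻¹ *ᵥ u t₁)))
            = (1 / 2 : ℝ) * (((1 - D2) *ᵥ u t₂) ⬝ᵥ (M *ᵥ ((4 - D2)⁻¹ *ᵥ u t₂))) := by
  set P : Matrix (Fin m) (Fin m) ℝ := 1 - D2 with hP
  set Q : Matrix (Fin m) (Fin m) ℝ := 4 - D2 with hQ
  -- basic symmetry facts over ℝ
  have hMT : Mᵀ = M := by
    have := hM.1
    rwa [Matrix.IsHermitian, conjTranspose_eq_transpose_of_trivial] at this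
  have hA2T : A2ᵀ = A2 := by
    have := hA2.1
    rwa [Matrix.IsHermitian, conjTranspose_eq_transpose_of_trivial] at this
  have h4 : (4 : Matrix (Fin m) (Fin m) ℝ) = (4:ℝ) • 1 := by
    rw [← Matrix.diagonal_ofNat (α := ℝ) (n := Fin m) 4]
    ext i j
    by_cases h : i = j <;> simp [h, Matrix.one_apply, Matrix.diagonal_apply]
  -- transposition identities
  have hD2M : D2ᵀ * M = M * D2 := by
    have := congrArg Matrix.transpose hD2
    rw [Matrix.transpose_mul, hMT, Matrix.transpose_neg, hA2T] at this
    rw [this, hD2]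
  have hPM : Pᵀ * M = M * P := by
    rw [hP, Matrix.transpose_sub, Matrix.transpose_one, Matrix.sub_mul,
      Matrix.mul_sub, Matrix.one_mul, Matrix.mul_one, hD2M]
  have hQM : Qᵀ * M = M * Q := by
    rw [hQ, Matrix.transpose_sub, h4, Matrix.transpose_smul, Matrix.transpose_one,
      Matrix.sub_mul, Matrix.mul_sub, hD2M, Matrix.smul_mul, Matrix.one_mul,
      Matrix.mul_smul, Matrix.mul_one]
  -- invertibility
  have hMP : M * P = M + A2 := by
    rw [hP, Matrix.mul_sub, Matrix.mul_one, hD2, sub_neg_eq_add]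
  have h4Mpos : ((4:ℝ) • M).PosDef := by
    refine Matrix.PosDef.of_dotProduct_mulVec_pos ?_ ?_
    · have := hM.1
      rw [Matrix.IsHermitian] at this ⊢
      rw [conjTranspose_smul, this, star_trivial]
    · intro x hx
      have := hM.dotProduct_mulVec_pos hx
      simp only [Matrix.smul_mulVec, dotProduct_smul, smul_eq_mul] at this ⊢
      positivity
  have hMQ : M * Q = (4:ℝ) • M + A2 := by
    rw [hQ, Matrix.mul_sub, hD2, sub_neg_eq_add, h4, Matrix.mul_smul, Matrix.mul_one]
  have hMdet : IsUnit M.det := isUnit_iff_ne_zero.mpr (ne_of_gt hM.det_pos)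
  have hPdet : IsUnit P.det := by
    have h1 : M.det * P.det = (M + A2).det := by rw [← Matrix.det_mul, hMP]
    have h2 : (M + A2).det ≠ 0 := ne_of_gt (hM.add_posSemidef hA2).det_pos
    refine isUnit_iff_ne_zero.mpr fun h => h2 ?_
    rw [← h1, h, mul_zero]
  have hQdet : IsUnit Q.det := by
    have h1 : M.det * Q.det = ((4:ℝ) • M + A2).det := by rw [← Matrix.det_mul, hMQ]
    have h2 : ((4:ℝ) • M + A2).det ≠ 0 := ne_of_gt (h4Mpos.add_posSemidef hA2).det_pos
    refine isUnit_iff_ne_zero.mpr fun h => h2 ?_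
    rw [← h1, h, mul_zero]
  refine ⟨(Matrix.isUnit_iff_isUnit_det P).mpr hPdet,
    (Matrix.isUnit_iff_isUnit_det Q).mpr hQdet, ?_⟩
  -- commutation facts
  have hPQ : P * Q = Q * P :=
    (Commute.one_left _).sub_left ((Commute.ofNat_right D2 4).sub_right (Commute.refl D2))
  have hQPinv : Q * P⁻¹ = P⁻¹ * Q := commute_inv_right Q P hPdet hPQ.symm
  have hPinvQinv : P⁻¹ * Q⁻¹ = Q⁻¹ * P⁻¹ := commute_inv_right P⁻¹ Q hQdet hQPinv.symm
  -- the matrix of the quadratic form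
  set B : Matrix (Fin m) (Fin m) ℝ := Pᵀ * M * Q⁻¹ with hB
  have key2 : B * (P⁻¹ * Q) = M := by
    calc B * (P⁻¹ * Q) = Pᵀ * M * ((Q⁻¹ * P⁻¹) * Q) := by
          rw [hB]; noncomm_ring
      _ = Pᵀ * M * (P⁻¹ * (Q⁻¹ * Q)) := by rw [← hPinvQinv]; noncomm_ring
      _ = Pᵀ * M * P⁻¹ := by
          rw [Matrix.nonsing_inv_mul _ hQdet, Matrix.mul_one]
      _ = M * P * P⁻¹ := by rw [hPM]
      _ = M := by
          rw [Matrix.mul_assoc, Matrix.mul_nonsing_inv _ hPdet, Matrix.mul_one]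
  have hQTdet : IsUnit Qᵀ.det := by rwa [Matrix.det_transpose]
  have key1 : Bᵀ = B := by
    have hQB : Qᵀ * B = M * P := by
      calc Qᵀ * (Pᵀ * M * Q⁻¹) = (P * Q)ᵀ * M * Q⁻¹ := by
            rw [Matrix.transpose_mul]; noncomm_ring
        _ = (Q * P)ᵀ * M * Q⁻¹ := by rw [hPQ]
        _ = Pᵀ * (Qᵀ * M) * Q⁻¹ := by rw [Matrix.transpose_mul]; noncomm_ring
        _ = Pᵀ * M * (Q * Q⁻¹) := by rw [hQM]; noncomm_ring
        _ = Pᵀ * M := by rw [Matrix.mul_nonsing_inv _ hQdet, Matrix.mul_one]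
        _ = M * P := hPM
    have hBT : Bᵀ = Qᵀ⁻¹ * (M * P) := by
      rw [hB, Matrix.transpose_mul, Matrix.transpose_mul, Matrix.transpose_transpose,
        hMT, Matrix.transpose_nonsing_inv]
    rw [hBT, ← hQB, ← Matrix.mul_assoc, Matrix.nonsing_inv_mul _ hQTdet, Matrix.one_mul]
  -- diagonal mass matrix and skew-symmetry kill the trilinear term
  have hdiagmul : ∀ a b : Fin m → ℝ, M *ᵥ (a * b) = a * (M *ᵥ b) := by
    intro a b
    funext i
    simp only [mulVec, dotProduct, Pi.mul_apply]
    rw [Finset.sum_eq_single i (fun j _ hj => by rw [hMdiag (Ne.symm hj), zero_mul])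
      (by simp), Finset.mul_sum,
      Finset.sum_eq_single i (fun j _ hj => by rw [hMdiag (Ne.symm hj), zero_mul, mul_zero])
      (by simp)]
    ring
  have hD1' : D1ᵀ * M = -(M * D1) := by
    have := hD1
    linear_combination (norm := noncomm_ring) this
  have hzero : ∀ v : Fin m → ℝ,
      v ⬝ᵥ (M *ᵥ (D1 *ᵥ (v * v) + v * (D1 *ᵥ v))) = 0 := by
    intro v
    rw [Matrix.mulVec_add, dotProduct_add]
    have t1 : v ⬝ᵥ (M *ᵥ (D1 *ᵥ (v * v)))
        = -(((M * D1) *ᵥ v) ⬝ᵥ (v * v)) := by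
      rw [Matrix.mulVec_mulVec, dotProduct_mulVec, ← Matrix.mulVec_transpose,
        Matrix.transpose_mul, hMT, hD1', Matrix.neg_mulVec, neg_dotProduct]
    have t2 : v ⬝ᵥ (M *ᵥ (v * (D1 *ᵥ v)))
        = ((M * D1) *ᵥ v) ⬝ᵥ (v * v) := by
      rw [hdiagmul, ← Matrix.mulVec_mulVec, dotProduct_comm]
      simp only [dotProduct, Pi.mul_apply]
      exact Finset.sum_congr rfl fun i _ => by ring
    rw [t1, t2, neg_add_cancel]
  -- conservation
  intro u hu t₁ t₂
  set f : ℝ → ℝ :=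
    fun s => (1 / 2 : ℝ) * ((P *ᵥ u s) ⬝ᵥ (M *ᵥ (Q⁻¹ *ᵥ u s))) with hf
  have hfquad : ∀ s, f s = (1 / 2 : ℝ) * (u s ⬝ᵥ (B *ᵥ u s)) := by
    intro s
    show (1 / 2 : ℝ) * ((P *ᵥ u s) ⬝ᵥ (M *ᵥ (Q⁻¹ *ᵥ u s)))
      = (1 / 2 : ℝ) * (u s ⬝ᵥ (B *ᵥ u s))
    rw [dot_transfer, Matrix.mulVec_mulVec, Matrix.mulVec_mulVec, hB]
  have hderiv : ∀ t, HasDerivAt f 0 t := by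
    intro t
    set w : Fin m → ℝ := D1 *ᵥ (u t * u t) + u t * (D1 *ᵥ u t) with hw
    set u' : Fin m → ℝ := -((1 / 3 : ℝ) • (P⁻¹ *ᵥ (Q *ᵥ w))) with hu'
    have hq := hasDerivAt_quadform B u u' t (hu t)
    have hBu' : B *ᵥ u' = -((1 / 3 : ℝ) • (M *ᵥ w)) := by
      rw [hu', Matrix.mulVec_neg, Matrix.mulVec_smul, Matrix.mulVec_mulVec,
        Matrix.mulVec_mulVec, Matrix.mul_assoc, key2]
    have hsym : u' ⬝ᵥ (B *ᵥ u t) = u t ⬝ᵥ (B *ᵥ u') := by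
      rw [dotProduct_comm, dot_transfer, key1]
    have hval : u t ⬝ᵥ (B *ᵥ u') = 0 := by
      rw [hBu', dotProduct_neg, dotProduct_smul, hzero (u t), smul_zero, neg_zero]
    have hzero' : u' ⬝ᵥ (B *ᵥ u t) + u t ⬝ᵥ (B *ᵥ u') = 0 := by
      rw [hsym, hval, add_zero]
    have h := hq.const_mul (1 / 2 : ℝ)
    rw [hzero', mul_zero] at h
    have : f = fun s => (1 / 2 : ℝ) * (u s ⬝ᵥ (B *ᵥ u s)) := funext hfquad
    rw [this]
    exact h
  exact is_const_of_deriv_eq_zero (fun t => (hderiv t).differentiableAt)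
    (fun t => (hderiv t).deriv) t₁ t₂
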